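/- Let N ≥ 1, let h_1, …, h_N ∈ ℝ^d be fixed points, and let X = (X_1, …, X_N) be i.i.d. random vectors in ℝ^d with common law μ. Suppose that almost surely the assignment problem min_{σ ∈ S_N} ∑_{i=1}^N ‖X_i − h_{σ(i)}‖² has a unique minimizing permutation σ̂(X). Then σ̂(X) is uniformly distributed on the symmetric group S_N, i.e., P(σ̂(X) = σ) = 1/N! for every permutation σ. -/

import Mathlib

open MeasureTheory ProbabilityTheory
open scoped BigOperators

/-- If `X_1, …, X_N` are i.i.d. and the assignment problem
`min_σ ∑ i ‖X_i − h_{σ(i)}‖²` almost surely has a unique minimizing permutation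
`σ̂`, then `σ̂` is uniformly distributed on the symmetric group `S_N`. -/
theorem optimal_assignment_uniformly_distributed (N : ℕ) (hN : 1 ≤ N) (d : ℕ)
    {Ω : Type*} [MeasureSpace Ω] [IsProbabilityMeasure (ℙ : Measure Ω)]
    (h : Fin N → EuclideanSpace ℝ (Fin d))
    (μ : Measure (EuclideanSpace ℝ (Fin d))) [IsProbabilityMeasure μ]
    (X : Fin N → Ω → EuclideanSpace ℝ (Fin d))
    (hXmeas : ∀ i, Measurable (X i))
    (hXindep : iIndepFun X ℙ)
    (hXlaw : ∀ i, Measure.map (X i) ℙ = μ)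
    (σhat : Ω → Equiv.Perm (Fin N))
    (hσmeas : ∀ σ : Equiv.Perm (Fin N), MeasurableSet {ω | σhat ω = σ})
    (hσopt : ∀ᵐ ω ∂(ℙ : Measure Ω),
      (∀ τ : Equiv.Perm (Fin N),
        ∑ i, ‖X i ω - h (σhat ω i)‖ ^ 2 ≤ ∑ i, ‖X i ω - h (τ i)‖ ^ 2) ∧
      (∀ τ : Equiv.Perm (Fin N),
        (∀ τ' : Equiv.Perm (Fin N),
          ∑ i, ‖X i ω - h (τ i)‖ ^ 2 ≤ ∑ i, ‖X i ω - h (τ' i)‖ ^ 2) →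
        τ = σhat ω)) :
    ∀ σ : Equiv.Perm (Fin N),
      (ℙ : Measure Ω) {ω | σhat ω = σ} = ((N.factorial : ENNReal))⁻¹ := by
  classical
  -- cost function
  set cost : Equiv.Perm (Fin N) → (Fin N → EuclideanSpace ℝ (Fin d)) → ℝ :=
    fun τ x => ∑ i, ‖x i - h (τ i)‖ ^ 2 with hcostdef
  have hcostMeas : ∀ τ, Measurable (cost τ) := by
    intro τ
    apply Finset.measurable_sum
    intro i _
    exact (((measurable_pi_apply i).sub measurable_const).norm).pow_const 2
  -- the set of x for which σ is optimal
  set A : Equiv.Perm (Fin N) → Set (Fin N → EuclideanSpace ℝ (Fin d)) :=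
    fun σ => ⋂ τ, {x | cost σ x ≤ cost τ x} with hAdef
  have hAmem : ∀ σ x, x ∈ A σ ↔ ∀ τ, cost σ x ≤ cost τ x := by
    intro σ x; simp [hAdef]
  have hAmeas : ∀ σ, MeasurableSet (A σ) :=
    fun σ => MeasurableSet.iInter fun τ => measurableSet_le (hcostMeas σ) (hcostMeas τ)
  -- joint random vector
  set Xvec : Ω → (Fin N → EuclideanSpace ℝ (Fin d)) := fun ω i => X i ω with hXvecdef
  have hXvecMeas : Measurable Xvec := measurable_pi_lambda _ hXmeas
  set ν : Measure (Fin N → EuclideanSpace ℝ (Fin d)) := Measure.pi (fun _ => μ) with hνdef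
  -- joint law is the product measure
  have hjoint : Measure.map Xvec ℙ = ν := by
    rw [hνdef]
    refine (Measure.pi_eq ?_).symm
    intro s hs
    rw [Measure.map_apply hXvecMeas (MeasurableSet.univ_pi hs)]
    have hpre : Xvec ⁻¹' Set.pi Set.univ s = ⋂ i ∈ Finset.univ, X i ⁻¹' s i := by
      ext ω; simp [Set.mem_pi, hXvecdef]
    rw [hpre, hXindep.measure_inter_preimage_eq_mul Finset.univ (fun i _ => hs i)]
    refine Finset.prod_congr rfl fun i _ => ?_
    rw [← hXlaw i, Measure.map_apply (hXmeas i) (hs i)]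
  -- permutation invariance of preimages of A
  have hcost_comp : ∀ (τ ρ : Equiv.Perm (Fin N)) (x : Fin N → EuclideanSpace ℝ (Fin d)),
      cost τ (x ∘ ρ) = cost (τ * ρ⁻¹) x := by
    intro τ ρ x
    have := Equiv.sum_comp ρ (fun j => ‖x j - h ((τ * ρ⁻¹) j)‖ ^ 2)
    simp only [Equiv.Perm.mul_apply, Equiv.Perm.inv_def, Equiv.symm_apply_apply] at this
    simpa [hcostdef] using this
  have hAinv : ∀ (σ π : Equiv.Perm (Fin N)), ν (A (σ * π)) = ν (A σ) := by
    intro σ π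
    have hmp := measurePreserving_piCongrLeft
      (fun _ : Fin N => μ) (π : Fin N ≃ Fin N)
    have hpre := hmp.measure_preimage (hAmeas σ).nullMeasurableSet
    have hgeq : ∀ y : Fin N → EuclideanSpace ℝ (Fin d),
        (MeasurableEquiv.piCongrLeft (fun _ : Fin N => EuclideanSpace ℝ (Fin d))
          (π : Fin N ≃ Fin N)) y = y ∘ ⇑(π⁻¹) := by
      intro y
      funext i
      have := MeasurableEquiv.piCongrLeft_apply_apply
        (β := fun _ : Fin N => EuclideanSpace ℝ (Fin d)) (π : Fin N ≃ Fin N) y (π⁻¹ i)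
      simpa using this
    have hset : (MeasurableEquiv.piCongrLeft (fun _ : Fin N => EuclideanSpace ℝ (Fin d))
        (π : Fin N ≃ Fin N)) ⁻¹' (A σ) = A (σ * π) := by
      ext y
      rw [Set.mem_preimage, hgeq y, hAmem, hAmem]
      simp only [hcost_comp, inv_inv]
      constructor
      · intro hy τ
        have := hy (τ * π⁻¹)
        simpa [mul_assoc] using this
      · intro hy τ
        exact hy (τ * π)
    rw [hset] at hpre
    exact hpre
  have hAconst : ∀ σ : Equiv.Perm (Fin N), ν (A σ) = ν (A 1) := by
    intro σ
    simpa using hAinv 1 σ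
  -- relate σhat events to A
  have hkey : ∀ σ : Equiv.Perm (Fin N),
      (ℙ : Measure Ω) {ω | σhat ω = σ} = ν (A σ) := by
    intro σ
    have hae : {ω | σhat ω = σ} =ᵐ[(ℙ : Measure Ω)] (Xvec ⁻¹' A σ) := by
      rw [Filter.eventuallyEq_set]
      filter_upwards [hσopt] with ω hω
      constructor
      · intro hσ
        rw [Set.mem_preimage, hAmem]
        intro τ
        have := hω.1 τ
        rw [hσ] at this
        simpa [hcostdef, hXvecdef] using this
      · intro hx
        rw [Set.mem_preimage, hAmem] at hx
        refine (hω.2 σ fun τ' => ?_).symm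
        simpa [hcostdef, hXvecdef] using hx τ'
    rw [measure_congr hae, ← hjoint, Measure.map_apply hXvecMeas (hAmeas σ)]
  -- partition
  have hpart : ∑ σ : Equiv.Perm (Fin N), (ℙ : Measure Ω) {ω | σhat ω = σ} = 1 := by
    have hdisj : Pairwise (Function.onFun Disjoint (fun σ => {ω | σhat ω = σ})) := by
      intro σ τ hστ
      refine Set.disjoint_left.2 fun ω h1 h2 => hστ ?_
      simp only [Set.mem_setOf_eq] at h1 h2
      rw [← h1, ← h2]
    have hunion : (⋃ σ : Equiv.Perm (Fin N), {ω | σhat ω = σ}) = Set.univ := by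
      ext ω; simp
    have := measure_iUnion (μ := (ℙ : Measure Ω)) hdisj hσmeas
    rw [hunion, measure_univ, tsum_fintype] at this
    exact this.symm
  intro σ
  have hcard : (Fintype.card (Equiv.Perm (Fin N)) : ENNReal) = (N.factorial : ENNReal) := by
    rw [Fintype.card_perm, Fintype.card_fin]
  have hsum : (N.factorial : ENNReal) * ν (A 1) = 1 := by
    calc (N.factorial : ENNReal) * ν (A 1)
        = ∑ _σ : Equiv.Perm (Fin N), ν (A 1) := by
          rw [Finset.sum_const, Finset.card_univ, nsmul_eq_mul, ← hcard]
      _ = ∑ σ : Equiv.Perm (Fin N), (ℙ : Measure Ω) {ω | σhat ω = σ} := by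
          refine Finset.sum_congr rfl fun τ _ => ?_
          rw [hkey τ, hAconst τ]
      _ = 1 := hpart
  have hne : (N.factorial : ENNReal) ≠ 0 := by
    exact_mod_cast Nat.cast_ne_zero.2 (Nat.factorial_ne_zero N)
  have hnetop : (N.factorial : ENNReal) ≠ ⊤ := ENNReal.natCast_ne_top _
  have hc : ν (A 1) = ((N.factorial : ENNReal))⁻¹ := by
    calc ν (A 1) = 1 * ν (A 1) := (one_mul _).symm
      _ = (((N.factorial : ENNReal))⁻¹ * (N.factorial : ENNReal)) * ν (A 1) := by
          rw [ENNReal.inv_mul_cancel hne hnetop]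
      _ = ((N.factorial : ENNReal))⁻¹ * ((N.factorial : ENNReal) * ν (A 1)) := by
          rw [mul_assoc]
      _ = ((N.factorial : ENNReal))⁻¹ := by rw [hsum, mul_one]
  rw [hkey σ, hAconst σ, hc]
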